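/- A dual logit is unique up to a joint ratio-scale transformation: two pairs (v₁,v₂) and (v₁',v₂') of strictly positive functions on X are dual-logit representations of the same random non-forced choice model ρ if and only if either there exist α, β > 0 with v₁' = α·v₁ and v₂' = β·v₂, or there exist α, β > 0 with v₁' = α·v₂ and v₂' = β·v₁. -/

import Mathlib

open Finset

/-- Dichotomy lemma: if for every pair either `F` agrees or `G` agrees, then one of
`F`, `G` is globally constant. -/
theorem stmt9_dichotomy {X : Type*} (F G : X → ℝ)
    (h : ∀ a b, F a = F b ∨ G a = G b) :
    (∀ a b, F a = F b) ∨ (∀ a b, G a = G b) := by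
  by_cases hF : ∀ a b, F a = F b
  · exact Or.inl hF
  · push_neg at hF
    obtain ⟨a, b, hab⟩ := hF
    have hG : G a = G b := (h a b).resolve_left hab
    right
    have key : ∀ c, G c = G a := by
      intro c
      rcases h a c with h1 | h1
      · rcases h b c with h2 | h2
        · exact absurd (h1.trans h2.symm) hab
        · exact h2.symm.trans hG.symm
      · exact h1.symm
    intro x y; rw [key x, key y]

/-- A dual logit is unique up to a joint ratio-scale transformation: two pairs of strictly
positive functions represent the same random non-forced choice model iff each function in
one pair is a positive multiple of a corresponding (possibly permuted) function in the
other pair. -/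
theorem stmt9 {X : Type*} [Fintype X] [DecidableEq X] [Nontrivial X]
    (v₁ v₂ v₁' v₂' : X → ℝ)
    (h₁ : ∀ a, 0 < v₁ a) (h₂ : ∀ a, 0 < v₂ a)
    (h₁' : ∀ a, 0 < v₁' a) (h₂' : ∀ a, 0 < v₂' a) :
    (∀ A : Finset X, A.Nonempty → ∀ a ∈ A,
        (v₁ a / ∑ b ∈ A, v₁ b) * (v₂ a / ∑ b ∈ A, v₂ b)
          = (v₁' a / ∑ b ∈ A, v₁' b) * (v₂' a / ∑ b ∈ A, v₂' b))
      ↔ ((∃ α > 0, ∃ β > 0, (∀ a, v₁' a = α * v₁ a) ∧ (∀ a, v₂' a = β * v₂ a)) ∨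
         (∃ α > 0, ∃ β > 0, (∀ a, v₁' a = α * v₂ a) ∧ (∀ a, v₂' a = β * v₁ a))) := by
  constructor
  · intro h
    obtain ⟨a₀, b₀, hne₀⟩ := exists_pair_ne X
    obtain ⟨c, hc0, hca₀⟩ : ∃ c : ℝ, 0 < c ∧ v₁' a₀ * v₂' a₀ = c * (v₁ a₀ * v₂ a₀) := by
      refine ⟨(v₁' a₀ * v₂' a₀) / (v₁ a₀ * v₂ a₀),
        div_pos (mul_pos (h₁' a₀) (h₂' a₀)) (mul_pos (h₁ a₀) (h₂ a₀)), ?_⟩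
      exact (div_mul_cancel₀ _ (mul_pos (h₁ a₀) (h₂ a₀)).ne').symm
    -- cross-multiplied pair equations for the menu {a, b}
    have pair_eq : ∀ a b : X, a ≠ b →
        (v₁ a * v₂ a) * ((v₁' a + v₁' b) * (v₂' a + v₂' b))
          = (v₁' a * v₂' a) * ((v₁ a + v₁ b) * (v₂ a + v₂ b)) ∧
        (v₁ b * v₂ b) * ((v₁' a + v₁' b) * (v₂' a + v₂' b))
          = (v₁' b * v₂' b) * ((v₁ a + v₁ b) * (v₂ a + v₂ b)) := by
      intro a b hab
      have hmA : a ∈ ({a, b} : Finset X) := mem_insert_self a {b}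
      have hmB : b ∈ ({a, b} : Finset X) := mem_insert_of_mem (mem_singleton_self b)
      have ea := h {a, b} ⟨a, hmA⟩ a hmA
      have eb := h {a, b} ⟨a, hmA⟩ b hmB
      simp only [sum_pair hab] at ea eb
      have d1 : v₁ a + v₁ b ≠ 0 := (add_pos (h₁ a) (h₁ b)).ne'
      have d2 : v₂ a + v₂ b ≠ 0 := (add_pos (h₂ a) (h₂ b)).ne'
      have d3 : v₁' a + v₁' b ≠ 0 := (add_pos (h₁' a) (h₁' b)).ne'
      have d4 : v₂' a + v₂' b ≠ 0 := (add_pos (h₂' a) (h₂' b)).ne'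
      field_simp at ea eb
      constructor
      · linear_combination ea
      · linear_combination eb
    -- products scale by c
    have hp : ∀ x, v₁' x * v₂' x = c * (v₁ x * v₂ x) := by
      intro x
      by_cases hx : x = a₀
      · subst hx; exact hca₀
      · obtain ⟨E1, E2⟩ := pair_eq a₀ x (fun hh => hx hh.symm)
        have hD : (0:ℝ) < (v₁ a₀ + v₁ x) * (v₂ a₀ + v₂ x) :=
          mul_pos (add_pos (h₁ a₀) (h₁ x)) (add_pos (h₂ a₀) (h₂ x))
        have hDD : (v₁' a₀ + v₁' x) * (v₂' a₀ + v₂' x)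
            = c * ((v₁ a₀ + v₁ x) * (v₂ a₀ + v₂ x)) := by
          have hmul : (v₁ a₀ * v₂ a₀) * ((v₁' a₀ + v₁' x) * (v₂' a₀ + v₂' x))
              = (v₁ a₀ * v₂ a₀) * (c * ((v₁ a₀ + v₁ x) * (v₂ a₀ + v₂ x))) := by
            linear_combination E1 + ((v₁ a₀ + v₁ x) * (v₂ a₀ + v₂ x)) * hca₀
          exact mul_left_cancel₀ (mul_pos (h₁ a₀) (h₂ a₀)).ne' hmul
        have hmul2 : (v₁' x * v₂' x) * ((v₁ a₀ + v₁ x) * (v₂ a₀ + v₂ x))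
            = (c * (v₁ x * v₂ x)) * ((v₁ a₀ + v₁ x) * (v₂ a₀ + v₂ x)) := by
          linear_combination (-1 : ℝ) * E2 + (v₁ x * v₂ x) * hDD
        exact mul_right_cancel₀ hD.ne' hmul2
    -- cross terms scale by c
    have hq : ∀ a b : X, a ≠ b →
        v₁' a * v₂' b + v₁' b * v₂' a = c * (v₁ a * v₂ b + v₁ b * v₂ a) := by
      intro a b hab
      obtain ⟨E1, E2⟩ := pair_eq a b hab
      have hpa : (0:ℝ) < v₁ a * v₂ a := mul_pos (h₁ a) (h₂ a)
      have hDD : (v₁' a + v₁' b) * (v₂' a + v₂' b)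
          = c * ((v₁ a + v₁ b) * (v₂ a + v₂ b)) := by
        have hmul : (v₁ a * v₂ a) * ((v₁' a + v₁' b) * (v₂' a + v₂' b))
            = (v₁ a * v₂ a) * (c * ((v₁ a + v₁ b) * (v₂ a + v₂ b))) := by
          linear_combination E1 + ((v₁ a + v₁ b) * (v₂ a + v₂ b)) * (hp a)
        exact mul_left_cancel₀ hpa.ne' hmul
      linear_combination hDD - hp a - hp b
    -- per-pair dichotomy
    have hdich : ∀ a b : X, (v₁' a / v₁ a = v₁' b / v₁ b) ∨ (v₁' a / v₂ a = v₁' b / v₂ b) := by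
      intro a b
      by_cases hab : a = b
      · subst hab; left; rfl
      · have hT : (v₁ b * v₁' a - v₁ a * v₁' b) * (v₂ b * v₁' a - v₂ a * v₁' b) = 0 := by
          have hcT : c * ((v₁ b * v₁' a - v₁ a * v₁' b) * (v₂ b * v₁' a - v₂ a * v₁' b)) = 0 := by
            linear_combination (-(v₁' a)^2) * (hp b) + (-(v₁' b)^2) * (hp a)
              + (v₁' a * v₁' b) * (hq a b hab)
          exact (mul_eq_zero.mp hcT).resolve_left hc0.ne'
        rcases mul_eq_zero.mp hT with h0 | h0
        · left
          rw [div_eq_div_iff (h₁ a).ne' (h₁ b).ne']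
          linear_combination sub_eq_zero.mp h0
        · right
          rw [div_eq_div_iff (h₂ a).ne' (h₂ b).ne']
          linear_combination sub_eq_zero.mp h0
    rcases stmt9_dichotomy (fun a => v₁' a / v₁ a) (fun a => v₁' a / v₂ a) hdich with hF | hG
    · left
      refine ⟨v₁' a₀ / v₁ a₀, div_pos (h₁' a₀) (h₁ a₀), c / (v₁' a₀ / v₁ a₀),
        div_pos hc0 (div_pos (h₁' a₀) (h₁ a₀)), fun a => ?_, fun a => ?_⟩
      · exact (div_eq_iff (h₁ a).ne').mp (hF a a₀)
      · have h1 : v₁' a = v₁' a₀ / v₁ a₀ * v₁ a := (div_eq_iff (h₁ a).ne').mp (hF a a₀)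
        have h2 : v₁' a * v₂' a = v₁' a * (c / (v₁' a₀ / v₁ a₀) * v₂ a) := by
          rw [hp a, h1]
          field_simp [(h₁ a₀).ne', (h₁' a₀).ne']
        exact mul_left_cancel₀ (h₁' a).ne' h2
    · right
      refine ⟨v₁' a₀ / v₂ a₀, div_pos (h₁' a₀) (h₂ a₀), c / (v₁' a₀ / v₂ a₀),
        div_pos hc0 (div_pos (h₁' a₀) (h₂ a₀)), fun a => ?_, fun a => ?_⟩
      · exact (div_eq_iff (h₂ a).ne').mp (hG a a₀)
      · have h1 : v₁' a = v₁' a₀ / v₂ a₀ * v₂ a := (div_eq_iff (h₂ a).ne').mp (hG a a₀)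
        have h2 : v₁' a * v₂' a = v₁' a * (c / (v₁' a₀ / v₂ a₀) * v₁ a) := by
          rw [hp a, h1]
          field_simp [(h₂ a₀).ne', (h₁' a₀).ne']
        exact mul_left_cancel₀ (h₁' a).ne' h2
  · rintro (⟨α, hα, β, hβ, hv1, hv2⟩ | ⟨α, hα, β, hβ, hv1, hv2⟩) A hA a ha
    · have s1 : ∑ b ∈ A, v₁' b = α * ∑ b ∈ A, v₁ b := by
        rw [mul_sum]; exact sum_congr rfl fun b _ => hv1 b
      have s2 : ∑ b ∈ A, v₂' b = β * ∑ b ∈ A, v₂ b := by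
        rw [mul_sum]; exact sum_congr rfl fun b _ => hv2 b
      rw [hv1 a, hv2 a, s1, s2, mul_div_mul_left _ _ hα.ne', mul_div_mul_left _ _ hβ.ne']
    · have s1 : ∑ b ∈ A, v₁' b = α * ∑ b ∈ A, v₂ b := by
        rw [mul_sum]; exact sum_congr rfl fun b _ => hv1 b
      have s2 : ∑ b ∈ A, v₂' b = β * ∑ b ∈ A, v₁ b := by
        rw [mul_sum]; exact sum_congr rfl fun b _ => hv2 b
      rw [hv1 a, hv2 a, s1, s2, mul_div_mul_left _ _ hα.ne', mul_div_mul_left _ _ hβ.ne',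
        mul_comm]
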